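/- Let $G$ be a topological group, $A, B \subseteq G$ compact with $aA \cup bB \subseteq A \cup B$ and $aA \cap bB = \emptyset$ for some $a, b \in G$. If the cyclic subgroup $H_a$ generated by $a$ is closed and discrete in $G$, and $H_a$ is normal in the subgroup generated by $\{a, b\}$, then $aA \cup bB = A \cup B$ and $A \cap B = \emptyset$. -/

import Mathlib

open Pointwise

section StmtAux

variable {G : Type*} [Group G] [TopologicalSpace G] [IsTopologicalGroup G]

set_option linter.unusedSectionVars false
set_option linter.unusedVariables false
set_option maxHeartbeats 1000000

variable {G : Type*} [Group G] [TopologicalSpace G] [IsTopologicalGroup G]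

/-- If some subgroup is closed and discrete, the whole group is Hausdorff. -/
private lemma stmt17_t2 {N : Subgroup G} (hNc : IsClosed (N : Set G))
    (hd : DiscreteTopology N) : T2Space G := by
  refine (IsTopologicalGroup.t2Space_iff_one_closed).mpr ?_
  -- get an open U with U ∩ N = {1}
  have hopen : IsOpen ({⟨1, one_mem N⟩} : Set N) := isOpen_discrete _
  rw [isOpen_induced_iff] at hopen
  obtain ⟨U, hUo, hUeq⟩ := hopen
  have hU1 : (1 : G) ∈ U := by
    have : (⟨1, one_mem N⟩ : N) ∈ (Subtype.val ⁻¹' U : Set N) := by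
      rw [hUeq]; rfl
    exact this
  have hUuniq : ∀ ν : G, ν ∈ N → ν ∈ U → ν = 1 := by
    intro ν hν hνU
    have : (⟨ν, hν⟩ : N) ∈ (Subtype.val ⁻¹' U : Set N) := hνU
    rw [hUeq] at this
    exact congrArg Subtype.val this
  have hclos : closure ({1} : Set G) ⊆ {1} := by
    intro z hz
    have hzN : z ∈ (N : Set G) := by
      have h1N : ({1} : Set G) ⊆ (N : Set G) := by
        intro x hx; rw [Set.mem_singleton_iff] at hx; subst hx; exact one_mem N
      have := closure_mono h1N hz
      rwa [hNc.closure_eq] at this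
    -- z ∈ U : use the open set {g | z * g⁻¹ ∈ U} which contains z, hence contains 1
    have hO : IsOpen {g : G | z * g⁻¹ ∈ U} := by
      have : Continuous fun g : G => z * g⁻¹ := by continuity
      exact hUo.preimage this
    have hzO : z ∈ {g : G | z * g⁻¹ ∈ U} := by simp [hU1]
    have hmeet := mem_closure_iff.mp hz _ hO hzO
    obtain ⟨w, hwO, hw1⟩ := hmeet
    rw [Set.mem_singleton_iff] at hw1; subst hw1
    have hzU : z ∈ U := by simpa using hwO
    simp [hUuniq z hzN hzU]
  exact isClosed_of_closure_subset hclos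

/-- A closed discrete subgroup meets every compact set in a finite set. -/
private lemma stmt17_finite_inter {N : Subgroup G} (hNc : IsClosed (N : Set G))
    (hd : DiscreteTopology N) {L : Set G} (hL : IsCompact L) :
    ((N : Set G) ∩ L).Finite := by
  have hc : IsCompact ((N : Set G) ∩ L) := hL.inter_left hNc
  have hdisc : DiscreteTopology ((N : Set G) ∩ L : Set G) :=
    DiscreteTopology.of_subset hd Set.inter_subset_left
  exact hc.finite ⟨hdisc⟩


/-- Recurrence lemma: if `K` is compact and `b K ⊆ N K` for a closed subgroup `N`
normalized by `b`, then every element of `K` lies in `N (b K)`. -/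
private lemma stmt17_claimB {N : Subgroup G} (hNc : IsClosed (N : Set G)) {b : G}
    (hb : ∀ ν ∈ N, b * ν * b⁻¹ ∈ N) (hb' : ∀ ν ∈ N, b⁻¹ * ν * b ∈ N)
    {K : Set G} (hK : IsCompact K)
    (hstep : ∀ k ∈ K, ∃ ν ∈ N, ∃ k' ∈ K, b * k = ν * k') :
    ∀ x ∈ K, ∃ ν ∈ N, ∃ k ∈ K, x = ν * (b * k) := by
  -- conjugation by powers of b
  have hconjpow : ∀ (t : ℕ) (ν : G), ν ∈ N → (b ^ t)⁻¹ * ν * b ^ t ∈ N := by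
    intro t
    induction t with
    | zero => intro ν hν; simpa using hν
    | succ n ih =>
      intro ν hν
      have he : (b ^ (n + 1))⁻¹ * ν * b ^ (n + 1) = b⁻¹ * ((b ^ n)⁻¹ * ν * b ^ n) * b := by
        rw [pow_succ]; group
      rw [he]
      exact hb' _ (ih ν hν)
  -- powers land in N * (b * K)
  have hpow : ∀ (d : ℕ), ∀ x ∈ K, ∃ ν ∈ N, ∃ k ∈ K, b ^ (d + 1) * x = ν * (b * k) := by
    intro d
    induction d with
    | zero =>
      intro x hx
      exact ⟨1, one_mem N, x, hx, by group⟩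
    | succ n ih =>
      intro x hx
      obtain ⟨ν, hν, k, hk, hrel⟩ := ih x hx
      obtain ⟨ν₂, hν₂, k₂, hk₂, hrel₂⟩ := hstep k hk
      refine ⟨b * ν * b⁻¹ * (b * ν₂ * b⁻¹), mul_mem (hb _ hν) (hb _ hν₂), k₂, hk₂, ?_⟩
      have e1 : b ^ (n + 1 + 1) * x = b * (b ^ (n + 1) * x) := by rw [pow_succ]; group
      rw [e1, hrel, hrel₂]
      group
  intro x hx
  -- choose sequences
  have hchoice : ∀ n : ℕ, ∃ p : G × G, p.1 ∈ N ∧ p.2 ∈ K ∧ b ^ (n + 1) * x = p.1 * (b * p.2) := by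
    intro n
    obtain ⟨ν, hν, k, hk, h⟩ := hpow n x hx
    exact ⟨(ν, k), hν, hk, h⟩
  choose p hp1 hp2 hp3 using hchoice
  set c : ℕ → G := fun n => b * (p n).2 with hc
  -- the target set, closed
  set T : Set G := (N : Set G) * ((fun g => b * g) '' K) with hT
  have hbK : IsCompact ((fun g : G => b * g) '' K) := hK.image (continuous_mul_left b)
  have hTclosed : IsClosed T := hNc.mul_right_of_isCompact hbK
  have hxT : x ∈ closure T := by
    rw [mem_closure_iff]
    intro O hO hxO
    set U : Set G := (fun g => x * g) ⁻¹' O with hU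
    have hUopen : IsOpen U := hO.preimage (continuous_mul_left x)
    have hU1 : (1 : G) ∈ U := by simp [hU, hxO]
    obtain ⟨W, hWopen, hW1, hWmul⟩ := exists_open_nhds_one_mul_subset (hUopen.mem_nhds hU1)
    set W' : Set G := W ∩ W⁻¹ with hW'
    have hW'open : IsOpen W' := hWopen.inter hWopen.inv
    have hW'1 : (1 : G) ∈ W' := ⟨hW1, by simpa using hW1⟩
    -- finite subcover of b•K by sets {g | y⁻¹ g ∈ W'}
    have hVopen : ∀ y : G, IsOpen {g : G | y⁻¹ * g ∈ W'} := fun y =>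
      hW'open.preimage (continuous_mul_left y⁻¹)
    have hcov : ((fun g : G => b * g) '' K) ⊆ ⋃ y : G, {g : G | y⁻¹ * g ∈ W'} := by
      intro z _
      exact Set.mem_iUnion.mpr ⟨z, by simpa using hW'1⟩
    obtain ⟨fs, hfs⟩ := hbK.elim_finite_subcover _ hVopen hcov
    have hcK : ∀ n : ℕ, c n ∈ ((fun g : G => b * g) '' K) := fun n => ⟨(p n).2, hp2 n, rfl⟩
    have hφ : ∀ n : ℕ, ∃ y ∈ fs, y⁻¹ * c n ∈ W' := by
      intro n
      have := hfs (hcK n)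
      simpa using this
    choose φ hφfs hφW using hφ
    -- pigeonhole
    have hinj : ∃ n m : ℕ, n ≠ m ∧ φ n = φ m := by
      have : ¬ Function.Injective φ := by
        intro hinj
        haveI : Finite ℕ := Finite.of_injective (fun n => (⟨φ n, hφfs n⟩ : {y // y ∈ fs}))
          (fun n m h => hinj (congrArg Subtype.val h))
        exact not_finite ℕ
      rw [Function.not_injective_iff] at this
      obtain ⟨n, m, h1, h2⟩ := this
      exact ⟨n, m, h2, h1⟩
    obtain ⟨n0, m0, hne0, heq0⟩ := hinj
    -- order them
    obtain ⟨n, m, hnm, heq⟩ : ∃ n m : ℕ, n < m ∧ φ n = φ m := by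
      rcases lt_or_gt_of_ne hne0 with h | h
      · exact ⟨n0, m0, h, heq0⟩
      · exact ⟨m0, n0, h, heq0.symm⟩
    -- v := (c n)⁻¹ * c m ∈ U
    have hv : (c n)⁻¹ * c m ∈ U := by
      have h1 : (φ n)⁻¹ * c n ∈ W' := hφW n
      have h2 : (φ n)⁻¹ * c m ∈ W' := by rw [heq]; exact hφW m
      have he : (c n)⁻¹ * c m = ((φ n)⁻¹ * c n)⁻¹ * ((φ n)⁻¹ * c m) := by group
      rw [he]
      have hinv : ((φ n)⁻¹ * c n)⁻¹ ∈ W := by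
        have := h1.2
        simpa using this
      exact hWmul (Set.mul_mem_mul hinv h2.1)
    -- the witness point
    set d : ℕ := m - n with hd
    have hd1 : 1 ≤ d := by omega
    obtain ⟨ν₄, hν₄, k', hk', hbd⟩ := hpow (d - 1) x hx
    have hbd' : b ^ d * x = ν₄ * (b * k') := by
      have : d - 1 + 1 = d := by omega
      rwa [this] at hbd
    have key : x * ((c n)⁻¹ * c m)
        = ((b ^ (n + 1))⁻¹ * ((p n).1 * ((p m).1)⁻¹) * b ^ (n + 1)) * (b ^ d * x) := by
      have hcn : c n = ((p n).1)⁻¹ * (b ^ (n + 1) * x) := by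
        rw [hp3 n]; group; rfl
      have hcm : c m = ((p m).1)⁻¹ * (b ^ (m + 1) * x) := by
        rw [hp3 m]; group; rfl
      have hsplit : b ^ (m + 1) = b ^ (n + 1) * b ^ d := by
        rw [← pow_add]; congr 1; omega
      rw [hcn, hcm, hsplit]; group
    have hζT : x * ((c n)⁻¹ * c m) ∈ T := by
      rw [key, hbd']
      have hν5 : (b ^ (n + 1))⁻¹ * ((p n).1 * ((p m).1)⁻¹) * b ^ (n + 1) * ν₄ ∈ N :=
        mul_mem (hconjpow (n + 1) _ (mul_mem (hp1 n) (inv_mem (hp1 m)))) hν₄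
      have he2 : (b ^ (n + 1))⁻¹ * ((p n).1 * ((p m).1)⁻¹) * b ^ (n + 1) * (ν₄ * (b * k'))
          = ((b ^ (n + 1))⁻¹ * ((p n).1 * ((p m).1)⁻¹) * b ^ (n + 1) * ν₄) * (b * k') := by
        group
      rw [he2]
      exact Set.mul_mem_mul hν5 ⟨k', hk', rfl⟩
    exact ⟨x * ((c n)⁻¹ * c m), hv, hζT⟩
  have hxT' : x ∈ T := hTclosed.closure_subset hxT
  obtain ⟨ν, hν, z, hz, hxe⟩ := hxT'
  obtain ⟨k0, hk0, rfl⟩ := hz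
  exact ⟨ν, hν, k0, hk0, hxe.symm⟩


private theorem stmt17_main {N : Subgroup G} (hNc : IsClosed (N : Set G))
    (hd : DiscreteTopology N) {a b : G} (haN : a ∈ N)
    (hb : ∀ ν ∈ N, b * ν * b⁻¹ ∈ N) (hb' : ∀ ν ∈ N, b⁻¹ * ν * b ∈ N)
    (hT2 : T2Space G)
    (claimB : ∀ {K : Set G}, IsCompact K →
      (∀ k ∈ K, ∃ ν ∈ N, ∃ k' ∈ K, b * k = ν * k') →
      ∀ x ∈ K, ∃ ν ∈ N, ∃ k ∈ K, x = ν * (b * k))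
    (finite_inter : ∀ {L : Set G}, IsCompact L → ((N : Set G) ∩ L).Finite)
    {A B : Set G} (hA : IsCompact A) (hB : IsCompact B)
    (h1 : a • A ∪ b • B ⊆ A ∪ B) (hdisj : a • A ∩ b • B = ∅) :
    a • A ∪ b • B = A ∪ B ∧ A ∩ B = ∅ := by
  set C : Set G := A ∪ B with hC
  set Dl : Set G := C \ (a • A ∪ b • B) with hDl
  set R : G → Set G := fun w => {g | g * w⁻¹ ∈ N} with hR
  have hRmem : ∀ w g : G, g ∈ R w ↔ g * w⁻¹ ∈ N := fun _ _ => Iff.rfl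
  have hRself : ∀ w : G, w ∈ R w := by
    intro w
    show w * w⁻¹ ∈ N
    simp [one_mem]
  have hReq : ∀ w y : G, y ∈ R w → R y = R w := by
    intro w y hy
    have hy' : y * w⁻¹ ∈ N := hy
    ext g
    constructor
    · intro hg
      have hg' : g * y⁻¹ ∈ N := hg
      have he : g * w⁻¹ = (g * y⁻¹) * (y * w⁻¹) := by group
      show g * w⁻¹ ∈ N
      rw [he]; exact mul_mem hg' hy'
    · intro hg
      have hg' : g * w⁻¹ ∈ N := hg
      have he : g * y⁻¹ = (g * w⁻¹) * (y * w⁻¹)⁻¹ := by group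
      show g * y⁻¹ ∈ N
      rw [he]; exact mul_mem hg' (inv_mem hy')
  have hCcomp : IsCompact C := hA.union hB
  -- finiteness of coset traces
  have hfin : ∀ (S : Set G) (w : G), S ⊆ C → (S ∩ R w).Finite := by
    intro S w hS
    have himg : (fun g => g * w⁻¹) '' (S ∩ R w) ⊆ (N : Set G) ∩ ((fun g => g * w⁻¹) '' C) := by
      rintro y ⟨g, ⟨hgS, hgR⟩, rfl⟩
      exact ⟨hgR, ⟨g, hS hgS, rfl⟩⟩
    have hfin2 : ((N : Set G) ∩ ((fun g => g * w⁻¹) '' C)).Finite :=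
      finite_inter (hCcomp.image (continuous_mul_right w⁻¹))
    have himgfin : ((fun g => g * w⁻¹) '' (S ∩ R w)).Finite := hfin2.subset himg
    exact Set.Finite.of_finite_image himgfin ((mul_left_injective w⁻¹).injOn)
  have hsubA : a • A ⊆ C := fun y hy => h1 (Or.inl hy)
  have hsubB : b • B ⊆ C := fun y hy => h1 (Or.inr hy)
  have hAC : A ⊆ C := Set.subset_union_left
  have hBC : B ⊆ C := Set.subset_union_right
  have hDlC : Dl ⊆ C := Set.diff_subset
  have hDC : A ∩ B ⊆ C := fun y hy => Or.inl hy.1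
  -- the fundamental counting identity
  have estar : ∀ w : G, (B ∩ R (b * w)).ncard
      = (B ∩ R w).ncard + ((A ∩ B) ∩ R (b * w)).ncard + (Dl ∩ R (b * w)).ncard := by
    intro w
    set P : Set G := R (b * w) with hP
    -- splitting of C ∩ P
    have hsplit : C ∩ P = (Dl ∩ P) ∪ ((a • A ∩ P) ∪ (b • B ∩ P)) := by
      ext y
      constructor
      · rintro ⟨hyC, hyP⟩
        by_cases hy : y ∈ a • A ∪ b • B
        · rcases hy with hy | hy
          · exact Or.inr (Or.inl ⟨hy, hyP⟩)
          · exact Or.inr (Or.inr ⟨hy, hyP⟩)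
        · exact Or.inl ⟨⟨hyC, hy⟩, hyP⟩
      · rintro (⟨hyD, hyP⟩ | ⟨hyA, hyP⟩ | ⟨hyB, hyP⟩)
        · exact ⟨hyD.1, hyP⟩
        · exact ⟨hsubA hyA, hyP⟩
        · exact ⟨hsubB hyB, hyP⟩
    -- translation identities
    have haA : a • A ∩ P = a • (A ∩ P) := by
      ext y
      constructor
      · rintro ⟨⟨x, hx, rfl⟩, hyP⟩
        refine ⟨x, ⟨hx, ?_⟩, rfl⟩
        have hyP' : (a • x) * (b * w)⁻¹ ∈ N := hyP
        have he : x * (b * w)⁻¹ = a⁻¹ * ((a • x) * (b * w)⁻¹) := by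
          simp [smul_eq_mul]; group
        show x * (b * w)⁻¹ ∈ N
        rw [he]; exact mul_mem (inv_mem haN) hyP'
      · rintro ⟨x, ⟨hx, hxP⟩, rfl⟩
        refine ⟨⟨x, hx, rfl⟩, ?_⟩
        have hxP' : x * (b * w)⁻¹ ∈ N := hxP
        have he : (a • x) * (b * w)⁻¹ = a * (x * (b * w)⁻¹) := by
          simp [smul_eq_mul]; group
        show (a • x) * (b * w)⁻¹ ∈ N
        rw [he]; exact mul_mem haN hxP'
    have hbB : b • B ∩ P = b • (B ∩ R w) := by
      ext y
      constructor
      · rintro ⟨⟨x, hx, rfl⟩, hyP⟩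
        refine ⟨x, ⟨hx, ?_⟩, rfl⟩
        have hyP' : (b • x) * (b * w)⁻¹ ∈ N := hyP
        have he : x * w⁻¹ = b⁻¹ * ((b • x) * (b * w)⁻¹) * b := by
          simp [smul_eq_mul]; group
        show x * w⁻¹ ∈ N
        rw [he]; exact hb' _ hyP'
      · rintro ⟨x, ⟨hx, hxR⟩, rfl⟩
        refine ⟨⟨x, hx, rfl⟩, ?_⟩
        have hxR' : x * w⁻¹ ∈ N := hxR
        have he : (b • x) * (b * w)⁻¹ = b * (x * w⁻¹) * b⁻¹ := by
          simp [smul_eq_mul]; group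
        show (b • x) * (b * w)⁻¹ ∈ N
        rw [he]; exact hb _ hxR'
    -- disjointness
    have hd1 : Disjoint (Dl ∩ P) ((a • A ∩ P) ∪ (b • B ∩ P)) := by
      rw [Set.disjoint_left]
      rintro y ⟨hyD, _⟩ (⟨hyA, _⟩ | ⟨hyB, _⟩)
      · exact hyD.2 (Or.inl hyA)
      · exact hyD.2 (Or.inr hyB)
    have hd2 : Disjoint (a • A ∩ P) (b • B ∩ P) := by
      rw [Set.disjoint_left]
      rintro y ⟨hyA, _⟩ ⟨hyB, _⟩
      have : y ∈ a • A ∩ b • B := ⟨hyA, hyB⟩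
      rw [hdisj] at this
      exact this
    -- finiteness of pieces
    have hfA : (a • A ∩ P).Finite := hfin _ _ hsubA
    have hfB : (b • B ∩ P).Finite := hfin _ _ hsubB
    have hfD : (Dl ∩ P).Finite := hfin _ _ hDlC
    have hfAP : (A ∩ P).Finite := hfin _ _ hAC
    have hfBP : (B ∩ P).Finite := hfin _ _ hBC
    have hfBw : (B ∩ R w).Finite := hfin _ _ hBC
    have hfCP : (C ∩ P).Finite := hfin _ _ (le_refl C)
    have hfABP : ((A ∩ B) ∩ P).Finite := hfin _ _ hDC
    -- cardinal computations
    have hc1 : (C ∩ P).ncard = (Dl ∩ P).ncard + ((a • A ∩ P).ncard + (b • B ∩ P).ncard) := by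
      rw [hsplit]
      rw [Set.ncard_union_eq hd1 hfD (hfA.union hfB)]
      rw [Set.ncard_union_eq hd2 hfA hfB]
    have hc2 : (a • A ∩ P).ncard = (A ∩ P).ncard := by
      rw [haA]
      have : a • (A ∩ P) = (fun g => a * g) '' (A ∩ P) := rfl
      rw [this, Set.ncard_image_of_injective _ (mul_right_injective a)]
    have hc3 : (b • B ∩ P).ncard = (B ∩ R w).ncard := by
      rw [hbB]
      have : b • (B ∩ R w) = (fun g => b * g) '' (B ∩ R w) := rfl
      rw [this, Set.ncard_image_of_injective _ (mul_right_injective b)]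
    -- inclusion–exclusion
    have hc4 : (C ∩ P).ncard + ((A ∩ B) ∩ P).ncard = (A ∩ P).ncard + (B ∩ P).ncard := by
      have hu : (A ∩ P) ∪ (B ∩ P) = C ∩ P := by
        rw [hC, Set.union_inter_distrib_right]
      have hi : (A ∩ P) ∩ (B ∩ P) = (A ∩ B) ∩ P := by
        ext y; constructor
        · rintro ⟨⟨h1', h2'⟩, ⟨h3', _⟩⟩; exact ⟨⟨h1', h3'⟩, h2'⟩
        · rintro ⟨⟨h1', h3'⟩, h2'⟩; exact ⟨⟨h1', h2'⟩, ⟨h3', h2'⟩⟩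
      have := Set.ncard_union_add_ncard_inter (A ∩ P) (B ∩ P) hfAP hfBP
      rw [hu, hi] at this
      exact this
    omega
  -- the compact sets K_m
  have hBclosed : IsClosed B := hB.isClosed
  have hΦfin : ((N : Set G) ∩ (B * B⁻¹)).Finite := finite_inter (hB.mul hB.inv)
  set ΦF : Finset G := hΦfin.toFinset with hΦF
  set Km : ℕ → Set G := fun m => {w | w ∈ B ∧ m ≤ (B ∩ R w).ncard} with hKm
  -- key counting bijection: for w ∈ B, the set of ν moving w into B
  have hVcard : ∀ w : G, ((fun ν => ν * w) '' {ν : G | ν ∈ N ∧ ν * w ∈ B}) = B ∩ R w := by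
    intro w
    ext y
    constructor
    · rintro ⟨ν, ⟨hν, hνB⟩, rfl⟩
      refine ⟨hνB, ?_⟩
      show ν * w * w⁻¹ ∈ N
      simpa using hν
    · rintro ⟨hyB, hyR⟩
      refine ⟨y * w⁻¹, ⟨hyR, by simpa using hyB⟩, by group⟩
  have hKmcompact : ∀ m : ℕ, IsCompact (Km m) := by
    intro m
    have heq : Km m = B ∩ (⋃ T ∈ (ΦF.powerset.filter fun T => T.card = m),
        ⋂ ν ∈ T, (fun g => ν * g) ⁻¹' B) := by
      ext w
      constructor
      · rintro ⟨hwB, hwcard⟩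
        refine ⟨hwB, ?_⟩
        set V : Set G := {ν : G | ν ∈ N ∧ ν * w ∈ B} with hV
        have hVsub : V ⊆ (N : Set G) ∩ (B * B⁻¹) := by
          rintro ν ⟨hν, hνB⟩
          refine ⟨hν, ?_⟩
          have : ν = (ν * w) * w⁻¹ := by group
          rw [this]
          exact Set.mul_mem_mul hνB (Set.inv_mem_inv.mpr hwB)
        have hVfin : V.Finite := hΦfin.subset hVsub
        have hVn : m ≤ V.ncard := by
          have := hVcard w
          have hcard : V.ncard = (B ∩ R w).ncard := by
            rw [← this, Set.ncard_image_of_injective _ (mul_left_injective w)]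
          omega
        have hVn' : m ≤ hVfin.toFinset.card := by
          rwa [← Set.ncard_eq_toFinset_card _ hVfin]
        obtain ⟨T, hTsub, hTcard⟩ := Finset.exists_subset_card_eq hVn'
        have hTΦ : T ⊆ ΦF := by
          intro ν hν
          have := hTsub hν
          rw [Set.Finite.mem_toFinset] at this
          rw [hΦF, Set.Finite.mem_toFinset]
          exact hVsub this
        refine Set.mem_iUnion₂.mpr ⟨T, ?_, ?_⟩
        · rw [Finset.mem_filter, Finset.mem_powerset]
          exact ⟨hTΦ, hTcard⟩
        · refine Set.mem_iInter₂.mpr ?_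
          intro ν hν
          have := hTsub hν
          rw [Set.Finite.mem_toFinset] at this
          exact this.2
      · rintro ⟨hwB, hwU⟩
        refine ⟨hwB, ?_⟩
        rw [Set.mem_iUnion₂] at hwU
        obtain ⟨T, hT, hwT⟩ := hwU
        rw [Finset.mem_filter, Finset.mem_powerset] at hT
        obtain ⟨hTΦ, hTcard⟩ := hT
        have hsub : (fun ν => ν * w) '' (T : Set G) ⊆ B ∩ R w := by
          rintro y ⟨ν, hν, rfl⟩
          have hνB : ν * w ∈ B := Set.mem_iInter₂.mp hwT ν hν
          have hνN : ν ∈ N := by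
            have := hTΦ hν
            rw [hΦF, Set.Finite.mem_toFinset] at this
            exact this.1
          exact ⟨hνB, by show ν * w * w⁻¹ ∈ N; simpa using hνN⟩
        have himg : ((fun ν => ν * w) '' (T : Set G)).ncard = m := by
          rw [Set.ncard_image_of_injective _ (mul_left_injective w), Set.ncard_coe_finset, hTcard]
        have := Set.ncard_le_ncard hsub (hfin _ _ hBC)
        omega
    have hclosed2 : IsClosed (Km m) := by
      rw [heq]
      refine hBclosed.inter ?_
      refine Set.Finite.isClosed_biUnion (Finset.finite_toSet _) ?_
      intro T _
      exact isClosed_biInter fun ν _ => hBclosed.preimage (continuous_mul_left ν)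
    exact IsCompact.of_isClosed_subset hB hclosed2 (fun w hw => hw.1)
  -- Claim A: b maps K_m into N · K_m
  have claimA : ∀ m : ℕ, 1 ≤ m → ∀ w ∈ Km m, ∃ ν ∈ N, ∃ z ∈ Km m, b * w = ν * z := by
    intro m hm w hw
    have hβ : m ≤ (B ∩ R (b * w)).ncard := by
      have := estar w
      have := hw.2
      omega
    have hne : (B ∩ R (b * w)).Nonempty := Set.nonempty_of_ncard_ne_zero (by omega)
    obtain ⟨z, hzB, hzR⟩ := hne
    have hRz : R z = R (b * w) := hReq _ _ hzR
    refine ⟨(z * (b * w)⁻¹)⁻¹, inv_mem hzR, z, ⟨hzB, by rw [hRz]; exact hβ⟩, by group⟩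
  -- Step 3: all charges vanish
  have step3 : ∀ w : G, ((A ∩ B) ∩ R w).ncard = 0 ∧ (Dl ∩ R w).ncard = 0 := by
    intro w
    have heqn : (B ∩ R w).ncard
        = (B ∩ R (b⁻¹ * w)).ncard + ((A ∩ B) ∩ R w).ncard + (Dl ∩ R w).ncard := by
      have := estar (b⁻¹ * w)
      rwa [mul_inv_cancel_left] at this
    rcases Nat.eq_zero_or_pos (B ∩ R w).ncard with h0 | hpos
    · omega
    · set m : ℕ := (B ∩ R w).ncard with hm
      have hne : (B ∩ R w).Nonempty := Set.nonempty_of_ncard_ne_zero (by omega)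
      obtain ⟨z, hzB, hzR⟩ := hne
      have hzK : z ∈ Km m := ⟨hzB, by rw [hReq _ _ hzR]⟩
      obtain ⟨ν, hν, z', hz'K, hzz'⟩ := claimB (hKmcompact m) (claimA m hpos) z hzK
      have hz' : z' ∈ R (b⁻¹ * w) := by
        have hzw : z * w⁻¹ ∈ N := hzR
        have hz'e : z' = b⁻¹ * (ν⁻¹ * z) := by rw [hzz']; group
        have he : z' * (b⁻¹ * w)⁻¹ = b⁻¹ * (ν⁻¹ * (z * w⁻¹)) * b := by
          rw [hz'e]; group
        show z' * (b⁻¹ * w)⁻¹ ∈ N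
        rw [he]
        exact hb' _ (mul_mem (inv_mem hν) hzw)
      have hge : m ≤ (B ∩ R (b⁻¹ * w)).ncard := by
        rw [← hReq _ _ hz']
        exact hz'K.2
      omega
  constructor
  · refine Set.Subset.antisymm h1 ?_
    intro y hy
    by_contra hyn
    have hyD : y ∈ Dl := ⟨hy, hyn⟩
    have h0 := (step3 y).2
    have hpos : 0 < (Dl ∩ R y).ncard :=
      (Set.ncard_pos (hfin _ _ hDlC)).mpr ⟨y, hyD, hRself y⟩
    omega
  · rw [Set.eq_empty_iff_forall_notMem]
    intro q hq
    have h0 := (step3 q).1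
    have hpos : 0 < ((A ∩ B) ∩ R q).ncard :=
      (Set.ncard_pos (hfin _ _ hDC)).mpr ⟨q, hq, hRself q⟩
    omega

end StmtAux

theorem stmt_17 {G : Type*} [Group G] [TopologicalSpace G] [IsTopologicalGroup G]
    (A B : Set G) (hA : IsCompact A) (hB : IsCompact B) (a b : G)
    (h1 : a • A ∪ b • B ⊆ A ∪ B) (hdisj : a • A ∩ b • B = ∅)
    (hclosed : IsClosed ((Subgroup.zpowers a : Subgroup G) : Set G))
    (hdisc : DiscreteTopology (Subgroup.zpowers a))
    (hnorm : ((Subgroup.zpowers a).subgroupOf (Subgroup.closure {a, b})).Normal) :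
    a • A ∪ b • B = A ∪ B ∧ A ∩ B = ∅ := by
  classical
  have haH : a ∈ Subgroup.closure ({a, b} : Set G) := Subgroup.subset_closure (by simp)
  have hbH : b ∈ Subgroup.closure ({a, b} : Set G) := Subgroup.subset_closure (by simp)
  have hNle : Subgroup.zpowers a ≤ Subgroup.closure ({a, b} : Set G) :=
    Subgroup.zpowers_le.mpr haH
  have hb : ∀ ν ∈ Subgroup.zpowers a, b * ν * b⁻¹ ∈ Subgroup.zpowers a := by
    intro ν hν
    have hx : (⟨ν, hNle hν⟩ : Subgroup.closure ({a, b} : Set G))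
        ∈ (Subgroup.zpowers a).subgroupOf (Subgroup.closure ({a, b} : Set G)) := by
      rw [Subgroup.mem_subgroupOf]; exact hν
    have hres := hnorm.conj_mem _ hx ⟨b, hbH⟩
    rw [Subgroup.mem_subgroupOf] at hres
    exact hres
  have hb' : ∀ ν ∈ Subgroup.zpowers a, b⁻¹ * ν * b ∈ Subgroup.zpowers a := by
    intro ν hν
    have hx : (⟨ν, hNle hν⟩ : Subgroup.closure ({a, b} : Set G))
        ∈ (Subgroup.zpowers a).subgroupOf (Subgroup.closure ({a, b} : Set G)) := by
      rw [Subgroup.mem_subgroupOf]; exact hν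
    have hres := hnorm.conj_mem _ hx ⟨b, hbH⟩⁻¹
    rw [Subgroup.mem_subgroupOf] at hres
    simpa using hres
  have hT2 : T2Space G := stmt17_t2 hclosed hdisc
  exact stmt17_main hclosed hdisc (Subgroup.mem_zpowers a) hb hb' hT2
    (fun {K} hK hstep => stmt17_claimB hclosed hb hb' hK hstep)
    (fun {L} hL => stmt17_finite_inter hclosed hdisc hL) hA hB h1 hdisj
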